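/- arXiv:1507.04846 — 3 statements merged into one kernel-verified Lean document; each statement's English description precedes it below -/
import Mathlib

section
/- For all n ≥ 0 and u ≠ 0, 1, the reflection-type symmetry (-1)ⁿ · h_{n,-λ}(-x|u) = h_{n,λ}(x+1|u⁻¹) holds. -/
open PowerSeries Finset

noncomputable section

/-- Degenerate falling factorial `(x|λ)_n = x(x-λ)⋯(x-(n-1)λ)`. -/
def degFall {K : Type*} [Ring K] (l x : K) : ℕ → K
  | 0 => 1
  | n + 1 => degFall l x n * (x - (n : K) * l)

/-- The formal power series `(1+λt)^{x/λ} := ∑_{m≥0} (x|λ)_m t^m/m!`. -/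
def binExp {K : Type*} [Field K] (l x : K) : PowerSeries K :=
  PowerSeries.mk fun n => degFall l x n / (n.factorial : K)

/-- Degenerate Frobenius–Euler polynomials `h_{n,λ}(x|u)`, defined by
`(1-u)/((1+λt)^{1/λ} - u) · (1+λt)^{x/λ} = ∑ h_{n,λ}(x|u) tⁿ/n!`. -/
def dFE {K : Type*} [Field K] (l u x : K) (n : ℕ) : K :=
  (n.factorial : K) * PowerSeries.coeff (R := K) n
    ((PowerSeries.C (R := K) (1 - u)) * (binExp l 1 - PowerSeries.C (R := K) u)⁻¹ * binExp l x)

/-- Degenerate Frobenius–Euler polynomials of order `r`. -/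
def dFEr {K : Type*} [Field K] (r : ℕ) (l u x : K) (n : ℕ) : K :=
  (n.factorial : K) * PowerSeries.coeff (R := K) n
    (((PowerSeries.C (R := K) (1 - u)) * (binExp l 1 - PowerSeries.C (R := K) u)⁻¹) ^ r * binExp l x)

/-- The exponential series `e^{xt} = ∑ xⁿ tⁿ/n!`. -/
def expX {K : Type*} [Field K] (x : K) : PowerSeries K :=
  PowerSeries.mk fun n => x ^ n / (n.factorial : K)

/-- Higher-order Frobenius–Euler polynomials `H^{(r)}_n(x|u)`, defined by
`((1-u)/(e^t-u))^r e^{xt} = ∑ H^{(r)}_n(x|u) tⁿ/n!`. -/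
def FEr {K : Type*} [Field K] (r : ℕ) (u x : K) (n : ℕ) : K :=
  (n.factorial : K) * PowerSeries.coeff (R := K) n
    (((PowerSeries.C (R := K) (1 - u)) * (expX (1 : K) - PowerSeries.C (R := K) u)⁻¹) ^ r * expX x)

/-- Signed Stirling numbers of the first kind: `(x)_n = ∑ S₁(n,l) x^l`. -/
def S1 : ℕ → ℕ → ℤ
  | 0, 0 => 1
  | 0, _ + 1 => 0
  | n + 1, 0 => -(n : ℤ) * S1 n 0
  | n + 1, k + 1 => S1 n k - (n : ℤ) * S1 n (k + 1)

/-- Stirling numbers of the second kind: `xⁿ = ∑ S₂(n,l) (x)_l`. -/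
def S2 : ℕ → ℕ → ℤ
  | 0, 0 => 1
  | 0, _ + 1 => 0
  | _ + 1, 0 => 0
  | n + 1, k + 1 => S2 n k + ((k : ℤ) + 1) * S2 n (k + 1)


section helpers
variable {K : Type*} [Field K] [CharZero K]

lemma degFall_smul (c l x : K) (n : ℕ) :
    degFall (c * l) (c * x) n = c ^ n * degFall l x n := by
  induction n with
  | zero => simp [degFall]
  | succ n ih => simp only [degFall, ih, pow_succ]; ring

lemma rescale_binExp (c l x : K) : rescale c (binExp l x) = binExp (c * l) (c * x) := by
  ext n
  simp [binExp, coeff_rescale, degFall_smul, mul_div_assoc]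

lemma degFall_zero_succ (l : K) (n : ℕ) : degFall l (0 : K) (n + 1) = 0 := by
  induction n with
  | zero => simp [degFall]
  | succ n ih =>
    show degFall l 0 (n+1) * _ = 0
    rw [ih, zero_mul]

lemma binExp_zero (l : K) : binExp l (0 : K) = 1 := by
  ext n
  cases n with
  | zero => simp [binExp, degFall]
  | succ n => simp [binExp, degFall_zero_succ]

lemma degFall_add (l x y : K) (n : ℕ) :
    ∑ k ∈ Finset.range (n + 1),
      (n.choose k : K) * (degFall l x k * degFall l y (n - k)) = degFall l (x + y) n := by
  induction n with
  | zero => simp [degFall]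
  | succ n ih =>
    rw [Finset.sum_range_succ' (fun k => ((n+1).choose k : K) * (degFall l x k * degFall l y (n + 1 - k))) (n+1)]
    simp only [Nat.succ_sub_succ, Nat.sub_zero, Nat.choose_zero_right, Nat.cast_one,
      Nat.choose_succ_succ, Nat.cast_add, add_mul, Finset.sum_add_distrib]
    have hS : ∑ k ∈ Finset.range (n+1), (n.choose (k+1) : K) * (degFall l x (k+1) * degFall l y (n - k))
        + (1 : K) * (degFall l x 0 * degFall l y (n + 1))
        = ∑ k ∈ Finset.range (n+1), (n.choose k : K) * (degFall l x k * degFall l y (n + 1 - k)) := by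
      have h := Finset.sum_range_succ' (fun k => (n.choose k : K) * (degFall l x k * degFall l y (n + 1 - k))) (n+1)
      rw [Finset.sum_range_succ] at h
      simp only [Nat.succ_sub_succ, Nat.sub_zero, Nat.choose_zero_right, Nat.cast_one,
        Nat.choose_succ_self, Nat.cast_zero, zero_mul, add_zero] at h
      exact h.symm
    rw [add_assoc, hS]
    have hrw : ∀ k ∈ Finset.range (n+1),
        (n.choose k : K) * (degFall l x (k+1) * degFall l y (n - k))
        = (n.choose k : K) * (degFall l x k * degFall l y (n - k)) * (x - (k : K) * l) := by
      intro k _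
      simp only [degFall]; ring
    have hrw2 : ∀ k ∈ Finset.range (n+1),
        (n.choose k : K) * (degFall l x k * degFall l y (n + 1 - k))
        = (n.choose k : K) * (degFall l x k * degFall l y (n - k)) * (y - ((n : K) - (k : K)) * l) := by
      intro k hk
      have hk' : k ≤ n := Nat.lt_succ_iff.mp (Finset.mem_range.mp hk)
      have hnk : n + 1 - k = (n - k) + 1 := by omega
      have hc : ((n - k : ℕ) : K) = (n : K) - (k : K) := Nat.cast_sub hk'
      rw [hnk]
      simp only [degFall, hc]; ring
    rw [Finset.sum_congr rfl hrw, Finset.sum_congr rfl hrw2, ← Finset.sum_add_distrib]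
    have hcomb : ∀ k ∈ Finset.range (n+1),
        (n.choose k : K) * (degFall l x k * degFall l y (n - k)) * (x - (k : K) * l)
        + (n.choose k : K) * (degFall l x k * degFall l y (n - k)) * (y - ((n : K) - (k : K)) * l)
        = (n.choose k : K) * (degFall l x k * degFall l y (n - k)) * ((x + y) - (n : K) * l) := by
      intro k _; ring
    rw [Finset.sum_congr rfl hcomb, ← Finset.sum_mul, ih]
    simp only [degFall]

lemma binExp_mul (l x y : K) : binExp l x * binExp l y = binExp l (x + y) := by
  ext n
  rw [PowerSeries.coeff_mul, Finset.Nat.sum_antidiagonal_eq_sum_range_succ_mk]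
  simp only [binExp, coeff_mk]
  rw [← degFall_add l x y n, Finset.sum_div]
  apply Finset.sum_congr rfl
  intro k hk
  have hk' : k ≤ n := Nat.lt_succ_iff.mp (Finset.mem_range.mp hk)
  have hfact : (n.factorial : K) = (n.choose k : K) * (k.factorial : K) * ((n-k).factorial : K) := by
    rw [← Nat.cast_mul, ← Nat.cast_mul, Nat.choose_mul_factorial_mul_factorial hk']
  have h1 : (k.factorial : K) ≠ 0 := Nat.cast_ne_zero.mpr k.factorial_ne_zero
  have h2 : (((n-k).factorial : ℕ) : K) ≠ 0 := Nat.cast_ne_zero.mpr (n-k).factorial_ne_zero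
  have hc0 : ((n.choose k : ℕ) : K) ≠ 0 :=
    Nat.cast_ne_zero.mpr (Nat.choose_pos hk').ne'
  rw [div_mul_div_comm, hfact, mul_assoc ((n.choose k : ℕ) : K),
    mul_div_assoc, mul_div_mul_left _ _ hc0, mul_div_assoc]

lemma constantCoeff_binExp (l x : K) : constantCoeff (binExp l x) = 1 := by
  rw [← coeff_zero_eq_constantCoeff]
  simp [binExp, degFall]

lemma rescale_C' (c r : K) : rescale c (C r) = C r := by
  ext n
  cases n <;> simp [coeff_rescale, PowerSeries.coeff_C]

lemma rescale_inv (c : K) (f : PowerSeries K) : rescale c f⁻¹ = (rescale c f)⁻¹ := by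
  by_cases h : constantCoeff f = 0
  · rw [PowerSeries.inv_eq_zero.mpr h, map_zero, eq_comm, PowerSeries.inv_eq_zero]
    rw [← coeff_zero_eq_constantCoeff, coeff_rescale, coeff_zero_eq_constantCoeff, h, mul_zero]
  · have hc : constantCoeff (rescale c f) ≠ 0 := by
      rwa [← coeff_zero_eq_constantCoeff, coeff_rescale, pow_zero, one_mul,
        coeff_zero_eq_constantCoeff]
    rw [PowerSeries.eq_inv_iff_mul_eq_one hc, ← map_mul,
      mul_comm, PowerSeries.mul_inv_cancel f h, map_one]

end helpers

theorem stmt3 {K : Type*} [Field K] [CharZero K] (l u x : K) (hu0 : u ≠ 0) (hu1 : u ≠ 1)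
    (n : ℕ) :
    (-1 : K) ^ n * dFE (-l) u (-x) n = dFE l u⁻¹ (x + 1) n := by
  have hu1' : (1 : K) - u ≠ 0 := sub_ne_zero.mpr (Ne.symm hu1)
  have huinv : (1 : K) - u⁻¹ ≠ 0 := by
    rw [sub_ne_zero]
    intro h
    exact hu1 (by rw [← inv_inv u, ← h, inv_one])
  set A := binExp l 1 with hA
  set B := binExp l (-1 : K) with hB
  have hBA : B * A = 1 := by
    rw [hB, hA, binExp_mul]; norm_num [binExp_zero]
  have hBc : constantCoeff (B - C u) ≠ 0 := by
    rw [map_sub, constantCoeff_binExp, constantCoeff_C]; exact hu1'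
  have hAc : constantCoeff (A - C u⁻¹) ≠ 0 := by
    rw [map_sub, constantCoeff_binExp, constantCoeff_C]; exact huinv
  have hBne : B - C u ≠ 0 := fun h => hBc (by rw [h, map_zero])
  -- key identity
  have key : C (1 - u) * (B - C u)⁻¹ = C (1 - u⁻¹) * (A - C u⁻¹)⁻¹ * A := by
    apply mul_right_cancel₀ hBne
    rw [mul_assoc, mul_comm (B - C u)⁻¹, PowerSeries.mul_inv_cancel _ hBc, mul_one]
    have hAB : A * (B - C u) = (A - C u⁻¹) * C (-u) := by
      have hcc : (C u⁻¹) * (C u) = 1 := by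
        rw [← map_mul, inv_mul_cancel₀ hu0, map_one]
      rw [mul_sub, mul_comm A B, hBA, sub_mul, map_neg, mul_neg, mul_neg, hcc]
      ring
    rw [mul_assoc, hAB, ← mul_assoc, mul_assoc (C (1 - u⁻¹)),
      mul_comm ((A - C u⁻¹)⁻¹), PowerSeries.mul_inv_cancel _ hAc, mul_one, ← map_mul]
    congr 1
    field_simp
    ring
  -- rescaling
  have hres1 : rescale (-1 : K) (binExp (-l) 1) = B := by
    rw [rescale_binExp]; norm_num [hB]
  have hres2 : rescale (-1 : K) (binExp (-l) (-x)) = binExp l x := by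
    rw [rescale_binExp]; norm_num
  have hresF : rescale (-1 : K) (C (1 - u) * (binExp (-l) 1 - C u)⁻¹ * binExp (-l) (-x))
      = C (1 - u⁻¹) * (A - C u⁻¹)⁻¹ * binExp l (x + 1) := by
    rw [map_mul, map_mul, rescale_inv, map_sub (rescale (-1:K)), rescale_C', rescale_C', hres1, hres2, key, mul_assoc, hA, binExp_mul, add_comm (1 : K) x]
  have hmain : (-1 : K) ^ n * (coeff n)
      (C (1 - u) * (binExp (-l) 1 - C u)⁻¹ * binExp (-l) (-x))
      = (coeff n) (C (1 - u⁻¹) * (A - C u⁻¹)⁻¹ * binExp l (x + 1)) := by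
    rw [← coeff_rescale, hresF]
  unfold dFE
  rw [← mul_assoc, mul_comm _ ((n.factorial : K)), mul_assoc, hmain]
end
end

section
/- For all m ≥ 0, the ordinary higher-order Frobenius-Euler polynomial H^{(r)}_m(x|u) equals ∑_{n=0}^{m} h^{(r)}_{n,λ}(x|u) · λ^{m-n} · S₂(m,n), where S₂(m,n) are the Stirling numbers of the second kind. -/
open PowerSeries Finset

noncomputable section

theorem S2_eq_zero : ∀ {m n : ℕ}, m < n → S2 m n = 0 := by
  intro m
  induction m with
  | zero => intro n h; obtain ⟨k, rfl⟩ := Nat.exists_eq_add_of_lt h; simp [S2]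
  | succ m ih =>
    intro n h
    obtain ⟨k, rfl⟩ : ∃ k, n = m + k + 2 := ⟨n - m - 2, by omega⟩
    show S2 (m + 1) ((m + k + 1) + 1) = 0
    rw [S2, ih (by omega), ih (by omega)]; ring

def Ee {K : Type*} [Field K] (l : K) : PowerSeries K :=
  PowerSeries.mk fun m => if m = 0 then 0 else l ^ (m - 1) / (m.factorial : K)

theorem deriv_Ee {K : Type*} [Field K] [CharZero K] (l : K) :
    derivativeFun (Ee l) = 1 + C (R := K) l * Ee l := by
  ext n
  rw [show (Ee l).derivativeFun = derivative K (Ee l) from rfl, coeff_derivative]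
  cases n with
  | zero => simp [Ee, coeff_mk]
  | succ k =>
    have h1 : ((k + 1 + 1).factorial : K) = ((k + 2) : K) * ((k+1).factorial : K) := by
      rw [Nat.factorial_succ]; push_cast; ring
    simp only [Ee, coeff_mk, map_add, coeff_one, coeff_C_mul, Nat.succ_ne_zero, if_false,
      Nat.add_sub_cancel]
    have h2 : ((k+1).factorial : K) ≠ 0 := Nat.cast_ne_zero.mpr (Nat.factorial_pos _).ne'
    have h3 : ((k + 1 + 1).factorial : K) ≠ 0 := Nat.cast_ne_zero.mpr (Nat.factorial_pos _).ne'
    rw [h1]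
    have h4 : ((k : K) + 2) ≠ 0 := by exact_mod_cast (Nat.cast_ne_zero (R := K)).mpr (Nat.succ_ne_zero (k + 1))
    push_cast
    field_simp
    ring

theorem derivFun_pow {K : Type*} [Field K] (f : PowerSeries K) :
    ∀ n : ℕ, derivativeFun (f ^ (n + 1)) = C (R := K) ((n : K) + 1) * f ^ n * derivativeFun f := by
  intro n
  induction n with
  | zero => simp [derivativeFun]
  | succ n ih =>
    rw [pow_succ, derivativeFun_mul, ih]
    simp only [smul_eq_mul]
    push_cast [map_add, map_one]
    ring

theorem constCoeff_Ee_pow {K : Type*} [Field K] (l : K) (n : ℕ) :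
    (coeff (R := K) 0) ((Ee l) ^ n) = if n = 0 then 1 else 0 := by
  rw [coeff_zero_eq_constantCoeff, map_pow]
  have : constantCoeff (R := K) (Ee l) = 0 := by simp [Ee, constantCoeff_mk]
  rw [this]
  cases n with
  | zero => simp
  | succ k => simp [zero_pow]

theorem coeff_Ee_pow {K : Type*} [Field K] [CharZero K] (l : K) :
    ∀ m n : ℕ, coeff (R := K) m ((Ee l) ^ n) =
      l ^ (m - n) * (S2 m n : K) * (n.factorial : K) / (m.factorial : K) := by
  intro m
  induction m with
  | zero =>
    intro n
    rw [constCoeff_Ee_pow]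
    cases n with
    | zero => simp [S2]
    | succ k => rw [S2_eq_zero (Nat.succ_pos k)]; simp
  | succ m ih =>
    intro n
    cases n with
    | zero =>
      simp only [pow_zero, coeff_one, Nat.succ_ne_zero, if_false]
      show (0 : K) = _
      rw [show S2 (m + 1) 0 = 0 from rfl]
      simp
    | succ n =>
      -- use the derivative recurrence
      have hd : coeff (R := K) m (derivativeFun ((Ee l) ^ (n + 1))) =
          coeff (R := K) (m + 1) ((Ee l) ^ (n + 1)) * ((m : K) + 1) := by
        exact coeff_derivative _ _
      have hd2 : coeff (R := K) m (derivativeFun ((Ee l) ^ (n + 1))) =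
          ((n : K) + 1) * (coeff (R := K) m ((Ee l) ^ n) + l * coeff (R := K) m ((Ee l) ^ (n + 1))) := by
        rw [derivFun_pow, deriv_Ee]
        have : C (R := K) ((n : K) + 1) * (Ee l) ^ n * (1 + C (R := K) l * Ee l) =
            C (R := K) ((n : K) + 1) * ((Ee l) ^ n + C (R := K) l * (Ee l) ^ (n + 1)) := by ring
        rw [this, coeff_C_mul, map_add, coeff_C_mul]
      have hm1 : ((m : K) + 1) ≠ 0 := by
        exact_mod_cast (Nat.cast_ne_zero (R := K)).mpr (Nat.succ_ne_zero m)
      have key : coeff (R := K) (m + 1) ((Ee l) ^ (n + 1)) =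
          ((n : K) + 1) * (coeff (R := K) m ((Ee l) ^ n) + l * coeff (R := K) m ((Ee l) ^ (n + 1)))
            / ((m : K) + 1) := by
        field_simp
        rw [← hd2, hd]
      rw [key, ih n, ih (n + 1)]
      have hfm : ((m.factorial : K)) ≠ 0 := Nat.cast_ne_zero.mpr (Nat.factorial_pos _).ne'
      have hfm1 : (((m + 1).factorial : K)) ≠ 0 := Nat.cast_ne_zero.mpr (Nat.factorial_pos _).ne'
      have hfn : ((n.factorial : K)) ≠ 0 := Nat.cast_ne_zero.mpr (Nat.factorial_pos _).ne'
      have hFm1 : (((m + 1).factorial : K)) = ((m : K) + 1) * (m.factorial : K) := by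
        rw [Nat.factorial_succ]; push_cast; ring
      have hFn1 : (((n + 1).factorial : K)) = ((n : K) + 1) * (n.factorial : K) := by
        rw [Nat.factorial_succ]; push_cast; ring
      rcases lt_or_ge m n with h | h
      · -- everything vanishes
        rw [S2_eq_zero h, S2_eq_zero (Nat.lt_succ_of_lt h), S2_eq_zero (Nat.succ_lt_succ h)]
        simp
      · -- m ≥ n
        have hsub : m + 1 - (n + 1) = m - n := by omega
        have hS : (S2 (m + 1) (n + 1) : K) = (S2 m n : K) + ((n : K) + 1) * (S2 m (n + 1) : K) := by
          rw [show S2 (m + 1) (n + 1) = S2 m n + ((n : ℤ) + 1) * S2 m (n + 1) from rfl]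
          push_cast; ring
        rw [hsub, hS, hFm1, hFn1]
        rcases eq_or_lt_of_le h with rfl | hlt
        · rw [S2_eq_zero (Nat.lt_succ_self _)]
          field_simp
          simp
        · have hp : m - (n + 1) + 1 = m - n := by omega
          have hl : l ^ (m - n) = l * l ^ (m - (n + 1)) := by
            rw [← pow_succ', hp]
          rw [hl]
          field_simp

theorem coeff_Ee_pow_eq_zero {K : Type*} [Field K] [CharZero K] (l : K) {m n : ℕ} (h : m < n) :
    coeff (R := K) m ((Ee l) ^ n) = 0 := by
  rw [coeff_Ee_pow, S2_eq_zero h]; simp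

def psub {K : Type*} [Field K] (l : K) (F : PowerSeries K) : PowerSeries K :=
  PowerSeries.mk fun m => ∑ n ∈ range (m + 1), coeff (R := K) n F * coeff (R := K) m ((Ee l) ^ n)

theorem coeff_psub {K : Type*} [Field K] (l : K) (F : PowerSeries K) (m : ℕ) :
    coeff (R := K) m (psub l F) = ∑ n ∈ range (m + 1), coeff (R := K) n F * coeff (R := K) m ((Ee l) ^ n) :=
  coeff_mk _ _

theorem psub_C {K : Type*} [Field K] (l : K) (a : K) : psub l (C (R := K) a) = C (R := K) a := by
  ext m
  rw [coeff_psub]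
  simp [coeff_C, ite_mul, Finset.sum_ite_eq, coeff_one, Nat.lt_succ_iff]

theorem psub_one {K : Type*} [Field K] (l : K) : psub l 1 = 1 := by
  have := psub_C l (1 : K)
  rwa [map_one] at this

theorem psub_sub {K : Type*} [Field K] (l : K) (F G : PowerSeries K) :
    psub l (F - G) = psub l F - psub l G := by
  ext m
  simp only [coeff_psub, map_sub, sub_mul, Finset.sum_sub_distrib]

theorem psub_mul {K : Type*} [Field K] [CharZero K] (l : K) (F G : PowerSeries K) :
    psub l (F * G) = psub l F * psub l G := by
  ext m
  set R := range (m + 1) with hR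
  have step1 : coeff (R := K) m (psub l (F * G)) =
      ∑ n ∈ R, ∑ p ∈ antidiagonal n, coeff (R := K) p.1 F * coeff (R := K) p.2 G * coeff (R := K) m ((Ee l) ^ (p.1 + p.2)) := by
    rw [coeff_psub]
    refine Finset.sum_congr rfl fun n _ => ?_
    rw [coeff_mul, Finset.sum_mul]
    refine Finset.sum_congr rfl fun p hp => ?_
    rw [show p.1 + p.2 = n from Finset.HasAntidiagonal.mem_antidiagonal.mp hp]
  have hdisj : (R : Set ℕ).PairwiseDisjoint (fun n => antidiagonal n) := by
    intro a _ b _ hab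
    simp only [Finset.disjoint_left]
    intro p hpa hpb
    exact hab ((Finset.HasAntidiagonal.mem_antidiagonal.mp hpa).symm.trans (Finset.HasAntidiagonal.mem_antidiagonal.mp hpb))
  have step2 : ∑ n ∈ R, ∑ p ∈ antidiagonal n,
        coeff (R := K) p.1 F * coeff (R := K) p.2 G * coeff (R := K) m ((Ee l) ^ (p.1 + p.2)) =
      ∑ p ∈ R ×ˢ R, coeff (R := K) p.1 F * coeff (R := K) p.2 G * coeff (R := K) m ((Ee l) ^ (p.1 + p.2)) := by
    rw [← Finset.sum_biUnion hdisj]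
    refine Finset.sum_subset ?_ ?_
    · intro p hp
      obtain ⟨n, hn, hpn⟩ := Finset.mem_biUnion.mp hp
      have := Finset.HasAntidiagonal.mem_antidiagonal.mp hpn
      rw [Finset.mem_product]
      have hn' : n < m + 1 := Finset.mem_range.mp hn
      constructor <;> · rw [Finset.mem_range]; omega
    · intro p hp hnp
      have hgt : m < p.1 + p.2 := by
        by_contra hle
        push_neg at hle
        exact hnp (Finset.mem_biUnion.mpr ⟨p.1 + p.2, by rw [hR, Finset.mem_range]; omega,
          Finset.HasAntidiagonal.mem_antidiagonal.mpr rfl⟩)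
      rw [coeff_Ee_pow_eq_zero l hgt, mul_zero]
  have step3 : coeff (R := K) m (psub l F * psub l G) =
      ∑ p ∈ R ×ˢ R, coeff (R := K) p.1 F * coeff (R := K) p.2 G * coeff (R := K) m ((Ee l) ^ (p.1 + p.2)) := by
    rw [coeff_mul]
    have hext : ∀ q ∈ antidiagonal m,
        coeff (R := K) q.1 (psub l F) * coeff (R := K) q.2 (psub l G) =
        (∑ i ∈ R, coeff (R := K) i F * coeff (R := K) q.1 ((Ee l) ^ i)) *
        (∑ j ∈ R, coeff (R := K) j G * coeff (R := K) q.2 ((Ee l) ^ j)) := by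
      intro q hq
      have hqm := Finset.HasAntidiagonal.mem_antidiagonal.mp hq
      rw [coeff_psub, coeff_psub]
      congr 1
      · refine Finset.sum_subset ?_ ?_
        · intro i hi; rw [Finset.mem_range] at *; omega
        · intro i _ hi
          rw [Finset.mem_range, not_lt] at hi
          rw [coeff_Ee_pow_eq_zero l (by omega), mul_zero]
      · refine Finset.sum_subset ?_ ?_
        · intro j hj; rw [Finset.mem_range] at *; omega
        · intro j _ hj
          rw [Finset.mem_range, not_lt] at hj
          rw [coeff_Ee_pow_eq_zero l (by omega), mul_zero]
    rw [Finset.sum_congr rfl hext]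
    simp_rw [Finset.sum_mul_sum]
    rw [Finset.sum_comm]
    rw [Finset.sum_product]
    refine Finset.sum_congr rfl fun i _ => ?_
    rw [Finset.sum_comm]
    refine Finset.sum_congr rfl fun j _ => ?_
    have : ∀ q ∈ antidiagonal m,
        coeff (R := K) i F * coeff (R := K) q.1 ((Ee l) ^ i) * (coeff (R := K) j G * coeff (R := K) q.2 ((Ee l) ^ j)) =
        coeff (R := K) i F * coeff (R := K) j G *
          (coeff (R := K) q.1 ((Ee l) ^ i) * coeff (R := K) q.2 ((Ee l) ^ j)) := fun q _ => by ring
    rw [Finset.sum_congr rfl this, ← Finset.mul_sum, ← coeff_mul, ← pow_add]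
  rw [step1, step2, step3]

theorem psub_pow {K : Type*} [Field K] [CharZero K] (l : K) (F : PowerSeries K) (r : ℕ) :
    psub l (F ^ r) = (psub l F) ^ r := by
  induction r with
  | zero => simpa using psub_one l
  | succ r ih => rw [pow_succ, pow_succ, psub_mul, ih]

theorem constantCoeff_psub {K : Type*} [Field K] (l : K) (F : PowerSeries K) :
    constantCoeff (R := K) (psub l F) = constantCoeff (R := K) F := by
  rw [← coeff_zero_eq_constantCoeff, coeff_psub]
  simp

theorem psub_inv {K : Type*} [Field K] [CharZero K] (l : K) (F : PowerSeries K)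
    (hF : constantCoeff (R := K) F ≠ 0) : psub l F⁻¹ = (psub l F)⁻¹ := by
  have h1 : constantCoeff (R := K) (psub l F) ≠ 0 := by rwa [constantCoeff_psub]
  rw [PowerSeries.eq_inv_iff_mul_eq_one h1, ← psub_mul, mul_comm, PowerSeries.mul_inv_cancel _ hF,
    psub_one]

theorem degFall_sum {K : Type*} [Field K] (l y : K) :
    ∀ m : ℕ, ∑ n ∈ range (m + 1), degFall l y n * l ^ (m - n) * (S2 m n : K) = y ^ m := by
  intro m
  induction m with
  | zero => simp [degFall, show S2 0 0 = 1 from rfl]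
  | succ m ih =>
    rw [Finset.sum_range_succ']
    have h0 : degFall l y 0 * l ^ (m + 1 - 0) * (S2 (m + 1) 0 : K) = 0 := by
      rw [show S2 (m + 1) 0 = 0 from rfl]; simp
    rw [h0, add_zero]
    have hsplit : ∀ i ∈ range (m + 1),
        degFall l y (i + 1) * l ^ (m + 1 - (i + 1)) * (S2 (m + 1) (i + 1) : K) =
        degFall l y i * (y - (i : K) * l) * l ^ (m - i) * (S2 m i : K)
          + degFall l y (i + 1) * l ^ (m - i) * (((i : K) + 1) * (S2 m (i + 1) : K)) := by
      intro i hi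
      rw [show S2 (m + 1) (i + 1) = S2 m i + ((i : ℤ) + 1) * S2 m (i + 1) from rfl,
        Nat.succ_sub_succ, show degFall l y (i + 1) = degFall l y i * (y - (i : K) * l) from rfl]
      push_cast
      ring
    rw [Finset.sum_congr rfl hsplit, Finset.sum_add_distrib]
    set g : ℕ → K := fun j => degFall l y j * l ^ (m + 1 - j) * ((j : K) * (S2 m j : K)) with hg
    have e1 : ∀ i ∈ range (m + 1),
        degFall l y (i + 1) * l ^ (m - i) * (((i : K) + 1) * (S2 m (i + 1) : K)) = g (i + 1) := by
      intro i hi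
      rw [hg]; simp only
      rw [Nat.succ_sub_succ]
      push_cast; ring
    have hg0 : g 0 = 0 := by rw [hg]; simp
    have hgm : g (m + 1) = 0 := by
      rw [hg]; simp only; rw [S2_eq_zero (Nat.lt_succ_self m)]; simp
    have hB : ∑ i ∈ range (m + 1), g (i + 1) = ∑ i ∈ range (m + 1), g i := by
      have h := (Finset.sum_range_succ' g (m + 1)).symm.trans (Finset.sum_range_succ g (m + 1))
      rw [hg0, hgm, add_zero, add_zero] at h
      exact h
    rw [Finset.sum_congr rfl e1, hB, ← Finset.sum_add_distrib]
    have hterm : ∀ i ∈ range (m + 1),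
        degFall l y i * (y - (i : K) * l) * l ^ (m - i) * (S2 m i : K) + g i =
        y * (degFall l y i * l ^ (m - i) * (S2 m i : K)) := by
      intro i hi
      rw [hg]; simp only
      have hi' : i ≤ m := Nat.lt_succ_iff.mp (Finset.mem_range.mp hi)
      rw [show m + 1 - i = (m - i) + 1 by omega, pow_succ]
      ring
    rw [Finset.sum_congr rfl hterm, ← Finset.mul_sum, ih, ← pow_succ']

theorem psub_binExp {K : Type*} [Field K] [CharZero K] (l y : K) :
    psub l (binExp l y) = expX y := by
  ext m
  rw [coeff_psub]
  have hterm : ∀ n ∈ range (m + 1),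
      coeff (R := K) n (binExp l y) * coeff (R := K) m ((Ee l) ^ n) =
      degFall l y n * l ^ (m - n) * (S2 m n : K) / (m.factorial : K) := by
    intro n hn
    rw [coeff_Ee_pow, show coeff (R := K) n (binExp l y) = degFall l y n / (n.factorial : K)
      from coeff_mk _ _]
    have hfn : ((n.factorial : K)) ≠ 0 := Nat.cast_ne_zero.mpr (Nat.factorial_pos _).ne'
    have hfm : ((m.factorial : K)) ≠ 0 := Nat.cast_ne_zero.mpr (Nat.factorial_pos _).ne'
    field_simp
  rw [Finset.sum_congr rfl hterm, ← Finset.sum_div, degFall_sum,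
    show coeff (R := K) m (expX y) = y ^ m / (m.factorial : K) from coeff_mk _ _]

theorem stmt8 {K : Type*} [Field K] [CharZero K] (l u x : K) (hu : u ≠ 1) (r : ℕ)
    (hr : 1 ≤ r) (m : ℕ) :
    FEr r u x m =
      ∑ n ∈ Finset.range (m + 1), dFEr r l u x n * l ^ (m - n) * (S2 m n : K) := by
  have hne : (1 : K) - u ≠ 0 := sub_ne_zero.mpr (Ne.symm hu)
  have hcc : constantCoeff (R := K) (binExp l 1 - C (R := K) u) ≠ 0 := by
    rw [map_sub, constantCoeff_C, show constantCoeff (R := K) (binExp l 1) = 1 by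
      simp [binExp, constantCoeff_mk, degFall]]
    exact hne
  set G : PowerSeries K :=
    ((C (R := K) (1 - u)) * (binExp l 1 - C (R := K) u)⁻¹) ^ r * binExp l x with hGdef
  have hG : psub l G = ((C (R := K) (1 - u)) * (expX (1 : K) - C (R := K) u)⁻¹) ^ r * expX x := by
    rw [hGdef, psub_mul, psub_pow, psub_mul, psub_C, psub_inv _ _ hcc, psub_sub, psub_C,
      psub_binExp, psub_binExp]
  have hfm : ((m.factorial : K)) ≠ 0 := Nat.cast_ne_zero.mpr (Nat.factorial_pos _).ne'
  calc FEr r u x m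
      = (m.factorial : K) * coeff (R := K) m (psub l G) := by rw [hG]; rfl
    _ = ∑ n ∈ range (m + 1), (m.factorial : K) * (coeff (R := K) n G * coeff (R := K) m ((Ee l) ^ n)) := by
        rw [coeff_psub, Finset.mul_sum]
    _ = ∑ n ∈ Finset.range (m + 1), dFEr r l u x n * l ^ (m - n) * (S2 m n : K) := by
        refine Finset.sum_congr rfl fun n hn => ?_
        rw [coeff_Ee_pow]
        have hfn : ((n.factorial : K)) ≠ 0 := Nat.cast_ne_zero.mpr (Nat.factorial_pos _).ne'
        rw [show dFEr r l u x n = (n.factorial : K) * coeff (R := K) n G from rfl]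
        field_simp
end
end

section
/- For all m ≥ 0, the degenerate higher-order Frobenius-Euler polynomial h^{(r)}_{m,λ}(x|u) equals ∑_{n=0}^{m} H^{(r)}_n(x|u) · λ^{m-n} · S₁(m,n), where S₁(m,n) are the (signed) Stirling numbers of the first kind. -/
open PowerSeries Finset

noncomputable section

section Aux

variable {K : Type*} [Field K] [CharZero K]
set_option linter.unusedSectionVars false

lemma S1_succ_zero (m : ℕ) : S1 (m + 1) 0 = 0 := by
  induction m with
  | zero => simp [S1]
  | succ k ih =>
    rw [show S1 (k + 1 + 1) 0 = -((k:ℤ)+1) * S1 (k+1) 0 from rfl, ih, mul_zero]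

lemma S1_eq_zero_of_lt : ∀ {m n : ℕ}, m < n → S1 m n = 0 := by
  intro m
  induction m with
  | zero => intro n hn; obtain ⟨k, rfl⟩ := Nat.exists_eq_add_of_lt hn; simp [S1]
  | succ p ih =>
    intro n hn
    obtain ⟨k, rfl⟩ : ∃ k, n = k + 1 := ⟨n - 1, by omega⟩
    have h1 : p < k := by omega
    rw [show S1 (p+1) (k+1) = S1 p k - (p:ℤ) * S1 p (k+1) from rfl,
      ih h1, ih (by omega)]
    ring

/-- Auxiliary series `L = log(1+λt)/λ`. -/
def Lser {K : Type*} [Field K] (l : K) : PowerSeries K :=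
  PowerSeries.mk fun k => if k = 0 then 0 else (-l) ^ (k - 1) / (k : K)

variable {K : Type*} [Field K] [CharZero K]
set_option linter.unusedSectionVars false

lemma constantCoeff_Lser (l : K) : constantCoeff (R := K) (Lser l) = 0 := by
  simp [Lser, ← coeff_zero_eq_constantCoeff]

lemma coeff_Lser_pow_eq_zero (l : K) {m n : ℕ} (h : m < n) :
    PowerSeries.coeff (R := K) m (Lser l ^ n) = 0 := by
  have hd : (X : K⟦X⟧) ^ n ∣ (Lser l) ^ n :=
    pow_dvd_pow_of_dvd (X_dvd_iff.mpr (constantCoeff_Lser l)) n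
  exact (X_pow_dvd_iff.mp hd) m h

lemma deriv_Lser (l : K) :
    (1 + PowerSeries.C (R := K) l * X) * (d⁄dX K (Lser l)) = 1 := by
  have hD : d⁄dX K (Lser l) = PowerSeries.mk fun k => (-l) ^ k := by
    ext k
    simp only [coeff_derivative, Lser, coeff_mk, Nat.succ_ne_zero, if_false,
      Nat.add_sub_cancel]
    push_cast
    rw [div_mul_cancel₀ _ (Nat.cast_add_one_ne_zero k)]
  rw [hD]
  ext k
  rcases k with _ | k
  · simp
  · simp only [map_mul, add_mul, one_mul, coeff_one, Nat.succ_ne_zero, if_false,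
      map_add, coeff_mk]
    rw [mul_assoc, PowerSeries.coeff_C_mul, coeff_succ_X_mul]
    simp [coeff_mk, pow_succ]
    ring

lemma Lser_rec (l : K) (m n : ℕ) :
    ((m : K) + 1) * coeff (R := K) (m + 1) (Lser l ^ (n + 1))
      + l * (m : K) * coeff (R := K) m (Lser l ^ (n + 1))
      = ((n : K) + 1) * coeff (R := K) m (Lser l ^ n) := by
  set G := d⁄dX K (Lser l ^ (n + 1)) with hG
  have hid : (1 + PowerSeries.C (R := K) l * X) * G = (n + 1 : ℕ) • (Lser l ^ n) := by
    rw [hG, Derivation.leibniz_pow, Nat.add_sub_cancel, nsmul_eq_mul, smul_eq_mul, nsmul_eq_mul]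
    calc (1 + PowerSeries.C (R := K) l * X) * (((n + 1 : ℕ) : K⟦X⟧) * (Lser l ^ n * d⁄dX K (Lser l)))
        = ((n + 1 : ℕ) : K⟦X⟧) * Lser l ^ n
            * ((1 + PowerSeries.C (R := K) l * X) * d⁄dX K (Lser l)) := by ring
      _ = _ := by rw [deriv_Lser, mul_one]
  have expand : (1 + PowerSeries.C (R := K) l * X) * G = G + PowerSeries.C (R := K) l * (X * G) := by ring
  have h := congrArg (coeff (R := K) m) hid
  rw [expand, map_add, map_nsmul, nsmul_eq_mul, PowerSeries.coeff_C_mul] at h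
  rcases m with _ | k
  · rw [coeff_zero_X_mul, hG] at h
    simp only [coeff_derivative] at h
    push_cast at h ⊢
    linear_combination h
  · rw [coeff_succ_X_mul, hG] at h
    simp only [coeff_derivative] at h
    push_cast at h ⊢
    linear_combination h

lemma key (l : K) : ∀ m n : ℕ,
    (m.factorial : K) * coeff (R := K) m (Lser l ^ n)
      = (n.factorial : K) * (S1 m n : K) * l ^ (m - n) := by
  intro m
  induction m with
  | zero =>
    intro n
    rcases n with _ | k
    · simp [S1]
    · have : coeff (R := K) 0 (Lser l ^ (k + 1)) = 0 := coeff_Lser_pow_eq_zero l (Nat.succ_pos k)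
      simp [this, S1]
  | succ p ih =>
    intro n
    rcases n with _ | k
    · have h1 : coeff (R := K) (p + 1) ((Lser l) ^ (0:ℕ)) = 0 := by
        simp [PowerSeries.coeff_one]
      simp [h1, S1_succ_zero]
    · have hrec := Lser_rec l p k
      have hmul := congrArg (fun z => (p.factorial : K) * z) hrec
      simp only [mul_add, mul_sub] at hmul
      have e1 : (p.factorial : K) * (((p : K) + 1) * coeff (R := K) (p + 1) (Lser l ^ (k + 1)))
          = ((p+1).factorial : K) * coeff (R := K) (p + 1) (Lser l ^ (k + 1)) := by
        rw [Nat.factorial_succ]; push_cast; ring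
      have e2 : (p.factorial : K) * (l * (p : K) * coeff (R := K) p (Lser l ^ (k + 1)))
          = l * (p : K) * ((k+1).factorial : K) * (S1 p (k+1) : K) * l ^ (p - (k+1)) := by
        linear_combination (l * (p : K)) * ih (k+1)
      have e3 : (p.factorial : K) * (((k : K) + 1) * coeff (R := K) p (Lser l ^ k))
          = ((k : K) + 1) * ((k.factorial : K) * (S1 p k : K) * l ^ (p - k)) := by
        linear_combination ((k : K) + 1) * ih k
      rw [e1, e2, e3] at hmul
      rw [eq_sub_of_add_eq hmul]
      have hS : (S1 (p+1) (k+1) : K) = (S1 p k : K) - (p : K) * (S1 p (k+1) : K) := by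
        rw [show S1 (p+1) (k+1) = S1 p k - (p:ℤ) * S1 p (k+1) from rfl]; push_cast; ring
      rw [hS]
      rcases lt_or_ge k p with hkp | hkp
      · have hp1 : p + 1 - (k + 1) = p - k := by omega
        have hp2 : p - k = (p - (k+1)) + 1 := by omega
        rw [hp1, hp2, pow_succ, Nat.factorial_succ]
        push_cast; ring
      · have hz : S1 p (k+1) = 0 := S1_eq_zero_of_lt (by omega)
        have hp1 : p + 1 - (k + 1) = p - k := by omega
        rw [hz, hp1, Nat.factorial_succ]
        push_cast; ring

lemma degFall_eq_sum (l y : K) (m : ℕ) :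
    degFall l y m = ∑ n ∈ range (m + 1), (S1 m n : K) * l ^ (m - n) * y ^ n := by
  induction m with
  | zero => simp [degFall, S1]
  | succ p ih =>
    have hstep : degFall l y (p + 1) = degFall l y p * (y - (p : K) * l) := rfl
    set B1 := ∑ n ∈ range (p + 1), (S1 p n : K) * l ^ (p - n) * y ^ (n + 1) with hB1
    set B2 := ∑ n ∈ range p, (p : K) * (S1 p (n + 1) : K) * l ^ (p - n) * y ^ (n + 1) with hB2
    set B3 := (p : K) * (S1 p 0 : K) * l ^ (p + 1) with hB3
    have hL : degFall l y (p + 1) = B1 - (B2 + B3) := by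
      rw [hstep, ih, mul_sub, Finset.sum_mul, Finset.sum_mul]
      have h1 : ∑ n ∈ range (p + 1), (S1 p n : K) * l ^ (p - n) * y ^ n * y = B1 := by
        apply Finset.sum_congr rfl; intro n _; ring
      have h2 : ∑ n ∈ range (p + 1), (S1 p n : K) * l ^ (p - n) * y ^ n * ((p : K) * l)
          = B2 + B3 := by
        rw [Finset.sum_range_succ' (fun n => (S1 p n : K) * l ^ (p - n) * y ^ n * ((p : K) * l)) p]
        congr 1
        · apply Finset.sum_congr rfl; intro n hn
          have hn' : n < p := Finset.mem_range.mp hn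
          have : p - n = (p - (n + 1)) + 1 := by omega
          rw [this, pow_succ]
          ring
        · rw [hB3]
          simp only [Nat.sub_zero, pow_zero, mul_one, pow_succ]
          ring
      rw [h1, h2]
    rw [hL, Finset.sum_range_succ' (fun n => (S1 (p+1) n : K) * l ^ (p + 1 - n) * y ^ n) (p+1)]
    have h0 : (S1 (p+1) 0 : K) * l ^ (p + 1 - 0) * y ^ 0 = -B3 := by
      rw [show S1 (p+1) 0 = -(p:ℤ) * S1 p 0 from rfl, hB3]
      push_cast; ring
    have hs : ∑ n ∈ range (p + 1), (S1 (p+1) (n+1) : K) * l ^ (p + 1 - (n+1)) * y ^ (n+1)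
        = B1 - (B2 + 0) := by
      have : ∀ n ∈ range (p + 1),
          (S1 (p+1) (n+1) : K) * l ^ (p + 1 - (n+1)) * y ^ (n+1)
            = (S1 p n : K) * l ^ (p - n) * y ^ (n+1)
              - (p : K) * (S1 p (n+1) : K) * l ^ (p - n) * y ^ (n+1) := by
        intro n _
        rw [show S1 (p+1) (n+1) = S1 p n - (p:ℤ) * S1 p (n+1) from rfl,
          show p + 1 - (n + 1) = p - n from by omega]
        push_cast; ring
      rw [Finset.sum_congr rfl this, Finset.sum_sub_distrib, hB1, hB2]
      congr 1
      rw [Finset.sum_range_succ]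
      rw [S1_eq_zero_of_lt (Nat.lt_succ_self p)]
      push_cast
      ring
    rw [hs, h0]
    ring

def Phi {K : Type*} [Field K] (l : K) (B : K⟦X⟧) : K⟦X⟧ :=
  PowerSeries.mk fun m => ∑ n ∈ range (m + 1), coeff (R := K) n B * coeff (R := K) m (Lser l ^ n)

lemma coeff_Phi (l : K) (B : K⟦X⟧) (m : ℕ) :
    coeff (R := K) m (Phi l B) = ∑ n ∈ range (m + 1), coeff (R := K) n B * coeff (R := K) m (Lser l ^ n) := by
  rw [Phi, coeff_mk]

lemma Phi_one (l : K) : Phi l 1 = 1 := by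
  ext m
  rw [coeff_Phi, Finset.sum_eq_single 0]
  · simp
  · intro n _ h0
    simp [PowerSeries.coeff_one, h0]
  · intro h
    exact absurd (Finset.mem_range.mpr (Nat.succ_pos m)) h

lemma Phi_C (l a : K) : Phi l (PowerSeries.C (R := K) a) = PowerSeries.C (R := K) a := by
  ext m
  rw [coeff_Phi, Finset.sum_eq_single 0]
  · simp [PowerSeries.coeff_C]
  · intro n _ h0
    simp [PowerSeries.coeff_C, h0]
  · intro h
    exact absurd (Finset.mem_range.mpr (Nat.succ_pos m)) h

lemma Phi_sub (l : K) (B Cc : K⟦X⟧) : Phi l (B - Cc) = Phi l B - Phi l Cc := by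
  ext m
  simp only [coeff_Phi, map_sub, sub_mul, Finset.sum_sub_distrib]

lemma Phi_mul (l : K) (B Cc : K⟦X⟧) : Phi l (B * Cc) = Phi l B * Phi l Cc := by
  ext m
  set F : ℕ × ℕ → K := fun p =>
    coeff (R := K) p.1 B * coeff (R := K) p.2 Cc * coeff (R := K) m (Lser l ^ (p.1 + p.2)) with hF
  have hFzero : ∀ p : ℕ × ℕ, m < p.1 + p.2 → F p = 0 := by
    intro p hp
    simp only [hF]
    rw [coeff_Lser_pow_eq_zero l hp, mul_zero]
  have hL : coeff (R := K) m (Phi l (B * Cc))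
      = ∑ p ∈ (range (m + 1)).biUnion Finset.HasAntidiagonal.antidiagonal, F p := by
    rw [coeff_Phi, Finset.sum_biUnion]
    · apply Finset.sum_congr rfl
      intro n _
      rw [PowerSeries.coeff_mul, Finset.sum_mul]
      apply Finset.sum_congr rfl
      intro p hp
      have hpn : p.1 + p.2 = n := Finset.HasAntidiagonal.mem_antidiagonal.mp hp
      simp only [hF, hpn]
    · intro a _ b _ hab
      simp only [Function.onFun]
      rw [Finset.disjoint_left]
      intro p hpa hpb
      exact hab ((Finset.HasAntidiagonal.mem_antidiagonal.mp hpa).symm.trans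
        (Finset.HasAntidiagonal.mem_antidiagonal.mp hpb))
  have hsub : (range (m + 1)).biUnion Finset.HasAntidiagonal.antidiagonal ⊆ range (m + 1) ×ˢ range (m + 1) := by
    intro p hp
    rw [Finset.mem_biUnion] at hp
    obtain ⟨n, hn, hpn⟩ := hp
    have h1 := Finset.HasAntidiagonal.mem_antidiagonal.mp hpn
    have h2 := Finset.mem_range.mp hn
    rw [Finset.mem_product, Finset.mem_range, Finset.mem_range]
    omega
  have hz : ∀ p ∈ range (m + 1) ×ˢ range (m + 1),
      p ∉ (range (m + 1)).biUnion Finset.HasAntidiagonal.antidiagonal → F p = 0 := by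
    intro p _ hnp
    apply hFzero
    by_contra hle
    push_neg at hle
    exact hnp (Finset.mem_biUnion.mpr ⟨p.1 + p.2, Finset.mem_range.mpr (by omega),
      Finset.HasAntidiagonal.mem_antidiagonal.mpr rfl⟩)
  have hR : coeff (R := K) m (Phi l B * Phi l Cc) = ∑ p ∈ range (m + 1) ×ˢ range (m + 1), F p := by
    rw [PowerSeries.coeff_mul]
    have step1 : ∀ p ∈ Finset.HasAntidiagonal.antidiagonal m,
        coeff (R := K) p.1 (Phi l B) * coeff (R := K) p.2 (Phi l Cc)
          = ∑ a ∈ range (m + 1), ∑ b ∈ range (m + 1),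
              coeff (R := K) a B * coeff (R := K) p.1 (Lser l ^ a)
                * (coeff (R := K) b Cc * coeff (R := K) p.2 (Lser l ^ b)) := by
      intro p hp
      have hpm := Finset.HasAntidiagonal.mem_antidiagonal.mp hp
      rw [coeff_Phi, coeff_Phi,
        Finset.sum_subset (Finset.range_subset_range.mpr (by omega : p.1 + 1 ≤ m + 1))
          (fun a _ ha => by
            rw [coeff_Lser_pow_eq_zero l (by simp only [Finset.mem_range] at ha; omega), mul_zero]),
        Finset.sum_subset (Finset.range_subset_range.mpr (by omega : p.2 + 1 ≤ m + 1))
          (fun b _ hb => by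
            rw [coeff_Lser_pow_eq_zero l (by simp only [Finset.mem_range] at hb; omega), mul_zero]),
        Finset.sum_mul_sum]
    rw [Finset.sum_congr rfl step1, Finset.sum_comm]
    rw [Finset.sum_product]
    apply Finset.sum_congr rfl
    intro a _
    rw [Finset.sum_comm]
    apply Finset.sum_congr rfl
    intro b _
    have : ∑ p ∈ Finset.HasAntidiagonal.antidiagonal m,
        coeff (R := K) a B * coeff (R := K) p.1 (Lser l ^ a) * (coeff (R := K) b Cc * coeff (R := K) p.2 (Lser l ^ b))
          = coeff (R := K) a B * coeff (R := K) b Cc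
            * ∑ p ∈ Finset.HasAntidiagonal.antidiagonal m, coeff (R := K) p.1 (Lser l ^ a) * coeff (R := K) p.2 (Lser l ^ b) := by
      rw [Finset.mul_sum]
      apply Finset.sum_congr rfl
      intro p _
      ring
    rw [this, ← PowerSeries.coeff_mul, ← pow_add]
  rw [hL, hR, Finset.sum_subset hsub hz]

lemma Phi_pow (l : K) (B : K⟦X⟧) (r : ℕ) : Phi l (B ^ r) = (Phi l B) ^ r := by
  induction r with
  | zero => simpa using Phi_one l
  | succ k ih => rw [pow_succ, pow_succ, Phi_mul, ih]

lemma Phi_expX (l y : K) : Phi l (expX y) = binExp l y := by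
  ext m
  have hfac : (m.factorial : K) ≠ 0 := Nat.cast_ne_zero.mpr m.factorial_ne_zero
  apply mul_left_cancel₀ hfac
  rw [coeff_Phi, binExp, coeff_mk, Finset.mul_sum]
  have hterm : ∀ n ∈ range (m + 1),
      (m.factorial : K) * (coeff (R := K) n (expX y) * coeff (R := K) m (Lser l ^ n))
        = (S1 m n : K) * l ^ (m - n) * y ^ n := by
    intro n _
    have hnfac : (n.factorial : K) ≠ 0 := Nat.cast_ne_zero.mpr n.factorial_ne_zero
    rw [expX, coeff_mk]
    calc (m.factorial : K) * (y ^ n / (n.factorial : K) * coeff (R := K) m (Lser l ^ n))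
        = (y ^ n / (n.factorial : K)) * ((m.factorial : K) * coeff (R := K) m (Lser l ^ n)) := by ring
      _ = (y ^ n / (n.factorial : K))
            * ((n.factorial : K) * (S1 m n : K) * l ^ (m - n)) := by rw [key l m n]
      _ = (S1 m n : K) * l ^ (m - n) * y ^ n := by
          field_simp
  rw [Finset.sum_congr rfl hterm, ← degFall_eq_sum]
  field_simp

lemma Phi_inv (l : K) (V : K⟦X⟧) (hV : constantCoeff (R := K) V ≠ 0) :
    Phi l V⁻¹ = (Phi l V)⁻¹ := by
  have hc : constantCoeff (R := K) (Phi l V) = constantCoeff (R := K) V := by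
    rw [← coeff_zero_eq_constantCoeff, coeff_Phi]
    simp
  have h1 : Phi l V * Phi l V⁻¹ = 1 := by
    rw [← Phi_mul, PowerSeries.mul_inv_cancel V hV, Phi_one]
  have h2 : Phi l V * (Phi l V)⁻¹ = 1 :=
    PowerSeries.mul_inv_cancel _ (by rw [hc]; exact hV)
  have hne : Phi l V ≠ 0 := by
    intro h
    rw [h, map_zero] at hc
    exact hV hc.symm
  exact mul_left_cancel₀ hne (h1.trans h2.symm)

end Aux

theorem stmt9 {K : Type*} [Field K] [CharZero K] (l u x : K) (hu : u ≠ 1) (r : ℕ)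
    (hr : 1 ≤ r) (m : ℕ) :
    dFEr r l u x m =
      ∑ n ∈ Finset.range (m + 1), FEr r u x n * l ^ (m - n) * (S1 m n : K) := by
  have hVc : constantCoeff (R := K) (expX (1 : K) - PowerSeries.C (R := K) u) = 1 - u := by
    rw [map_sub, constantCoeff_C, ← coeff_zero_eq_constantCoeff]
    rw [expX, coeff_mk]
    simp
  have hVne : constantCoeff (R := K) (expX (1 : K) - PowerSeries.C (R := K) u) ≠ 0 := by
    rw [hVc]
    exact sub_ne_zero.mpr (Ne.symm hu)
  have hPhi : Phi l (((PowerSeries.C (R := K) (1 - u)) * (expX (1 : K) - PowerSeries.C (R := K) u)⁻¹) ^ r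
        * expX x)
      = ((PowerSeries.C (R := K) (1 - u)) * (binExp l 1 - PowerSeries.C (R := K) u)⁻¹) ^ r * binExp l x := by
    rw [Phi_mul, Phi_pow, Phi_mul, Phi_C, Phi_inv _ _ hVne, Phi_sub, Phi_expX, Phi_C, Phi_expX]
  rw [dFEr, ← hPhi, coeff_Phi, Finset.mul_sum]
  apply Finset.sum_congr rfl
  intro n _
  rw [FEr]
  calc (m.factorial : K) * (coeff (R := K) n (((PowerSeries.C (R := K) (1 - u))
          * (expX (1 : K) - PowerSeries.C (R := K) u)⁻¹) ^ r * expX x) * coeff (R := K) m (Lser l ^ n))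
      = coeff (R := K) n (((PowerSeries.C (R := K) (1 - u)) * (expX (1 : K) - PowerSeries.C (R := K) u)⁻¹) ^ r
          * expX x) * ((m.factorial : K) * coeff (R := K) m (Lser l ^ n)) := by ring
    _ = coeff (R := K) n (((PowerSeries.C (R := K) (1 - u)) * (expX (1 : K) - PowerSeries.C (R := K) u)⁻¹) ^ r
          * expX x) * ((n.factorial : K) * (S1 m n : K) * l ^ (m - n)) := by rw [key l m n]
    _ = _ := by ring
end
end
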